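/- arXiv:1011.0554 — 5 statements merged into one kernel-verified Lean document; each statement's English description precedes it below -/
import Mathlib

section
/- For n = 2(k+1) with k ≥ 0 and any j with 0 ≤ j ≤ n/2, the submodule of ℤ^{n-1} generated by the vectors {η_0, ..., η_{n/2}} \ {η_j} (omitting η_j) is a direct summand of ℤ^{n-1} of rank n/2. -/
/-- The characteristic vectors `η_j ∈ ℤ^{n-1}` (coordinates indexed by `Fin (n-1)`,
where index `i` corresponds to the standard basis vector `e_{i+1}`):
`η_j = e_{j+1}` for `0 ≤ j < n/2 - 1`, `η_{n/2-1} = e_1 + ⋯ + e_{n/2}`,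
`η_j = e_j` for `n/2 ≤ j < n`, and `η_n = e_{n/2} + ⋯ + e_{n-1}`. -/
def eta (n j : ℕ) : Fin (n - 1) → ℤ := fun i =>
  if j < n / 2 - 1 then (if i.val = j then 1 else 0)
  else if j = n / 2 - 1 then (if i.val < n / 2 then 1 else 0)
  else if j < n then (if i.val + 1 = j then 1 else 0)
  else (if n / 2 ≤ i.val + 1 then 1 else 0)

lemma sum_single_apply {m : ℕ} (p : Fin m → Prop) [DecidablePred p] (x : Fin m) :
    (∑ i ∈ Finset.univ.filter p, Pi.single i (1 : ℤ)) x = if p x then 1 else 0 := by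
  rw [Finset.sum_apply]
  simp only [Pi.single_apply]
  rw [Finset.sum_ite_eq]
  simp

theorem eta_first_half_omit_one_direct_summand (k n : ℕ) (hn : n = 2 * (k + 1))
    (j : ℕ) (hj : j ≤ n / 2) :
    (∃ N' : Submodule ℤ (Fin (n - 1) → ℤ),
        IsCompl (Submodule.span ℤ (eta n '' {i | i ≤ n / 2 ∧ i ≠ j})) N') ∧
      Module.finrank ℤ (Submodule.span ℤ (eta n '' {i | i ≤ n / 2 ∧ i ≠ j})) = n / 2 := by
  subst hn
  set n := 2 * (k + 1) with hn
  have h2 : n / 2 = k + 1 := by omega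
  have hm : n - 1 = 2 * k + 1 := by omega
  have hkm : k < n - 1 := by omega
  set A : Set (Fin (n - 1)) := {i | i.val ≤ k} with hA
  set s : Set ℕ := {i | i ≤ n / 2 ∧ i ≠ j} with hs
  -- descriptions of the relevant eta vectors
  have heta_small : ∀ i : ℕ, i < k →
      eta n i = fun x => if x.val = i then 1 else 0 := by
    intro i hi
    have c1 : i < n / 2 - 1 := by omega
    funext x
    simp only [eta, if_pos c1]
  have heta_k : eta n k = fun x => if x.val ≤ k then 1 else 0 := by
    have c1 : ¬ k < n / 2 - 1 := by omega
    have c2 : k = n / 2 - 1 := by omega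
    funext x
    simp only [eta, if_neg c1, if_pos c2]
    by_cases h : x.val < n / 2 <;> simp [h] <;> omega
  have heta_k1 : eta n (k + 1) = fun x => if x.val = k then 1 else 0 := by
    have c1 : ¬ k + 1 < n / 2 - 1 := by omega
    have c2 : ¬ k + 1 = n / 2 - 1 := by omega
    have c3 : k + 1 < n := by omega
    funext x
    simp only [eta, if_neg c1, if_neg c2, if_pos c3]
    by_cases h : x.val + 1 = k + 1 <;> simp [h] <;> omega
  have hsingle : ∀ i : Fin (n - 1),
      (Pi.single i (1 : ℤ) : Fin (n - 1) → ℤ) = fun x => if x.val = i.val then 1 else 0 := by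
    intro i
    funext x
    simp [Pi.single_apply, Fin.ext_iff]
  set T : Submodule ℤ (Fin (n - 1) → ℤ) :=
    Submodule.span ℤ ((fun i : Fin (n - 1) => Pi.single i (1 : ℤ)) '' A) with hT
  set E : Submodule ℤ (Fin (n - 1) → ℤ) := Submodule.span ℤ (eta n '' s) with hE
  -- the sum vector is eta n k
  have hvsum : eta n k = ∑ i ∈ Finset.univ.filter (fun i : Fin (n - 1) => i.val ≤ k),
      Pi.single i (1 : ℤ) := by
    funext x
    rw [sum_single_apply, heta_k]
  -- forward inclusion : E ≤ T
  have hET : E ≤ T := by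
    rw [hE]
    apply Submodule.span_le.2
    rintro _ ⟨i, ⟨hi1, hi2⟩, rfl⟩
    rcases lt_trichotomy i k with h | h | h
    · have : eta n i = Pi.single (⟨i, by omega⟩ : Fin (n - 1)) (1 : ℤ) := by
        rw [heta_small i h, hsingle]
      rw [this]
      exact Submodule.subset_span ⟨_, by simp [hA]; omega, rfl⟩
    · subst h
      rw [hvsum]
      apply Submodule.sum_mem
      intro c hc
      simp only [Finset.mem_filter] at hc
      exact Submodule.subset_span ⟨_, hc.2, rfl⟩
    · have hik : i = k + 1 := by omega
      subst hik
      have : eta n (k + 1) = Pi.single (⟨k, hkm⟩ : Fin (n - 1)) (1 : ℤ) := by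
        rw [heta_k1, hsingle]
      rw [this]
      exact Submodule.subset_span ⟨_, by simp [hA], rfl⟩
  -- small singles are in E
  have hsmallE : ∀ x : Fin (n - 1), x.val < k → x.val ≠ j → Pi.single x (1 : ℤ) ∈ E := by
    intro x hx hxj
    have : Pi.single x (1 : ℤ) = eta n x.val := by
      rw [heta_small x.val hx, hsingle]
    rw [this]
    exact Submodule.subset_span ⟨x.val, ⟨by omega, hxj⟩, rfl⟩
  -- the single at coordinate k is in E
  have hkE : Pi.single (⟨k, hkm⟩ : Fin (n - 1)) (1 : ℤ) ∈ E := by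
    by_cases hjk : j = k + 1
    · -- single k = eta n k - sum of small singles
      have hek : eta n k ∈ E :=
        Submodule.subset_span ⟨k, ⟨by omega, by omega⟩, rfl⟩
      have hsum : (∑ i ∈ Finset.univ.filter (fun i : Fin (n - 1) => i.val < k),
          Pi.single i (1 : ℤ)) ∈ E := by
        apply Submodule.sum_mem
        intro c hc
        simp only [Finset.mem_filter] at hc
        exact hsmallE c hc.2 (by omega)
      have heq : Pi.single (⟨k, hkm⟩ : Fin (n - 1)) (1 : ℤ) =
          eta n k - ∑ i ∈ Finset.univ.filter (fun i : Fin (n - 1) => i.val < k),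
            Pi.single i (1 : ℤ) := by
        funext x
        rw [hsingle]
        simp only [Pi.sub_apply, heta_k, sum_single_apply]
        by_cases h1 : x.val = k <;> by_cases h2 : x.val ≤ k <;> by_cases h3 : x.val < k <;>
          simp [h1, h2, h3] <;> omega
      rw [heq]
      exact Submodule.sub_mem _ hek hsum
    · have : Pi.single (⟨k, hkm⟩ : Fin (n - 1)) (1 : ℤ) = eta n (k + 1) := by
        rw [heta_k1, hsingle]
      rw [this]
      exact Submodule.subset_span ⟨k + 1, ⟨by omega, fun h => hjk h.symm⟩, rfl⟩
  -- all singles with x ≠ j are in E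
  have hCE : ∀ x : Fin (n - 1), x.val ≤ k → x.val ≠ j → Pi.single x (1 : ℤ) ∈ E := by
    intro x hx hxj
    rcases lt_or_eq_of_le hx with h | h
    · exact hsmallE x h hxj
    · have : x = (⟨k, hkm⟩ : Fin (n - 1)) := Fin.ext (show x.val = k from h)
      rw [this]; exact hkE
  -- reverse inclusion
  have hTE : T ≤ E := by
    rw [hT]
    apply Submodule.span_le.2
    rintro _ ⟨i, hi, rfl⟩
    simp only [hA, Set.mem_setOf_eq] at hi
    by_cases hij : i.val = j
    · -- i.val = j ≤ k
      by_cases hjk : j = k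
      · have : i = (⟨k, hkm⟩ : Fin (n - 1)) := Fin.ext (show i.val = k by omega)
        rw [this]; exact hkE
      · -- j < k : single j = eta n k - (sum of singles ≤ k, ≠ j)
        have hjltk : j < k := by omega
        have hek : eta n k ∈ E :=
          Submodule.subset_span ⟨k, ⟨by omega, by omega⟩, rfl⟩
        have hsum : (∑ c ∈ Finset.univ.filter (fun c : Fin (n - 1) => c.val ≤ k ∧ c.val ≠ j),
            Pi.single c (1 : ℤ)) ∈ E := by
          apply Submodule.sum_mem
          intro c hc
          simp only [Finset.mem_filter] at hc
          exact hCE c hc.2.1 hc.2.2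
        have heq : Pi.single i (1 : ℤ) =
            eta n k - ∑ c ∈ Finset.univ.filter (fun c : Fin (n - 1) => c.val ≤ k ∧ c.val ≠ j),
              Pi.single c (1 : ℤ) := by
          funext x
          rw [hsingle]
          simp only [Pi.sub_apply, heta_k, sum_single_apply]
          by_cases h1 : x.val = i.val <;> by_cases h2 : x.val ≤ k <;>
            by_cases h3 : x.val = j <;> simp [h1, h2, h3] <;> omega
        simp only [SetLike.mem_coe]
        rw [heq]
        exact Submodule.sub_mem _ hek hsum
    · exact hCE i hi hij
  have hTEeq : E = T := le_antisymm hET hTE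
  rw [hTEeq]
  set b := Pi.basisFun ℤ (Fin (n - 1)) with hb
  have hbA : (fun i : Fin (n - 1) => Pi.single i (1 : ℤ)) '' A = ⇑b '' A := by
    apply Set.image_congr
    intro i _
    rw [hb, Pi.basisFun_apply]
  constructor
  · refine ⟨Submodule.span ℤ (⇑b '' Aᶜ), ?_, ?_⟩
    · rw [hT, hbA]
      exact b.linearIndependent.disjoint_span_image disjoint_compl_right
    · rw [codisjoint_iff, hT, hbA, ← Submodule.span_union, ← Set.image_union,
        Set.union_compl_self, Set.image_univ, b.span_eq]
  · rw [hT, hbA, h2]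
    have hli : LinearIndependent ℤ ((↑) : (⇑b '' A) → (Fin (n - 1) → ℤ)) :=
      LinearIndepOn.id_image (s := A) (b.linearIndependent.comp _ Subtype.val_injective)
    rw [finrank_span_set_eq_card hli]
    rw [Set.toFinset_image, Finset.card_image_of_injective _ b.injective]
    have : A.toFinset = Finset.Iic (⟨k, hkm⟩ : Fin (n - 1)) := by
      ext x
      simp [hA, Fin.le_def]
    rw [this, Fin.card_Iic]
end

section
/- For n = 2(k+1) with k ≥ 0 and any l with n/2 ≤ l ≤ n, the submodule of ℤ^{n-1} generated by the vectors {η_{n/2}, ..., η_n} \ {η_l} (omitting η_l) is a direct summand of ℤ^{n-1} of rank n/2. -/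
lemma eta_eq_single (k j : ℕ) (h1 : k + 1 ≤ j) (h2 : j < 2 * (k + 1)) :
    eta (2 * (k + 1)) j = Pi.single (⟨j - 1, by omega⟩ : Fin (2 * (k + 1) - 1)) 1 := by
  have hdiv : 2 * (k + 1) / 2 = k + 1 := by omega
  funext i
  simp only [eta, hdiv, Pi.single_apply]
  rw [if_neg (by omega), if_neg (by omega), if_pos h2]
  rcases eq_or_ne (i.val + 1) j with h | h
  · rw [if_pos h, if_pos (by apply Fin.ext; simp; omega)]
  · rw [if_neg h, if_neg (by intro hc; apply h; have := congrArg Fin.val hc; simp at this; omega)]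

lemma eta_top (k : ℕ) :
    eta (2 * (k + 1)) (2 * (k + 1)) =
      ∑ i ∈ Finset.univ.filter (fun i : Fin (2 * (k + 1) - 1) => k ≤ i.val),
        Pi.single i (1 : ℤ) := by
  have hdiv : 2 * (k + 1) / 2 = k + 1 := by omega
  funext i
  simp only [eta, hdiv, Finset.sum_apply, Pi.single_apply]
  rw [if_neg (by omega), if_neg (by omega), if_neg (by omega)]
  rw [Finset.sum_ite_eq _ i (fun _ => (1:ℤ))]
  simp only [Finset.mem_filter, Finset.mem_univ, true_and]
  split_ifs <;> omega

lemma single_mem_span (k l : ℕ) (i : Fin (2 * (k + 1) - 1)) (hi : k ≤ i.val)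
    (hne : i.val + 1 ≠ l) :
    Pi.single i (1 : ℤ) ∈ Submodule.span ℤ
      (eta (2 * (k + 1)) '' {j | 2 * (k + 1) / 2 ≤ j ∧ j ≤ 2 * (k + 1) ∧ j ≠ l}) := by
  have h := eta_eq_single k (i.val + 1) (by omega) (by omega)
  have hi1 : (⟨i.val + 1 - 1, by omega⟩ : Fin (2 * (k + 1) - 1)) = i := by
    apply Fin.ext; simp
  rw [hi1] at h
  rw [← h]
  exact Submodule.subset_span ⟨i.val + 1, ⟨by omega, by omega, hne⟩, rfl⟩

lemma span_eq_span_single (k l : ℕ) (hl : k + 1 ≤ l) (hl' : l ≤ 2 * (k + 1)) :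
    Submodule.span ℤ
        (eta (2 * (k + 1)) '' {j | 2 * (k + 1) / 2 ≤ j ∧ j ≤ 2 * (k + 1) ∧ j ≠ l}) =
      Submodule.span ℤ
        ((fun i => Pi.single i (1 : ℤ)) '' {i : Fin (2 * (k + 1) - 1) | k ≤ i.val}) := by
  apply le_antisymm
  · rw [Submodule.span_le]
    rintro x ⟨j, ⟨hj1, hj2, hj3⟩, rfl⟩
    rcases hj2.lt_or_eq with hjlt | rfl
    · rw [eta_eq_single k j (by omega) hjlt]
      exact Submodule.subset_span ⟨_, by simp; omega, rfl⟩
    · rw [eta_top]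
      exact Submodule.sum_mem _ fun i hi =>
        Submodule.subset_span ⟨i, (Finset.mem_filter.mp hi).2, rfl⟩
  · rw [Submodule.span_le]
    rintro x ⟨i, hi, rfl⟩
    have hik : k ≤ i.val := hi
    by_cases hne : i.val + 1 = l
    · have htop : eta (2 * (k + 1)) (2 * (k + 1)) ∈ Submodule.span ℤ
          (eta (2 * (k + 1)) '' {j | 2 * (k + 1) / 2 ≤ j ∧ j ≤ 2 * (k + 1) ∧ j ≠ l}) :=
        Submodule.subset_span ⟨2 * (k + 1), ⟨by omega, le_rfl, by omega⟩, rfl⟩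
      have hmem : i ∈ Finset.univ.filter
          (fun i : Fin (2 * (k + 1) - 1) => k ≤ i.val) := by
        simp [hik]
      have hsum : Pi.single i (1 : ℤ) =
          eta (2 * (k + 1)) (2 * (k + 1)) -
            ∑ i' ∈ (Finset.univ.filter
              (fun i : Fin (2 * (k + 1) - 1) => k ≤ i.val)).erase i,
              Pi.single i' (1 : ℤ) := by
        rw [eta_top, ← Finset.add_sum_erase _ _ hmem]
        abel
      show (Pi.single i (1 : ℤ) : Fin (2 * (k + 1) - 1) → ℤ) ∈ _
      rw [hsum]
      refine Submodule.sub_mem _ htop (Submodule.sum_mem _ fun i' hi' => ?_)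
      obtain ⟨hii, hmemf⟩ := Finset.mem_erase.mp hi'
      refine single_mem_span k l i' (Finset.mem_filter.mp hmemf).2 fun hc => hii ?_
      apply Fin.ext; omega
    · exact single_mem_span k l i hik hne

theorem eta_second_half_omit_one_direct_summand (k n : ℕ) (hn : n = 2 * (k + 1))
    (l : ℕ) (hl : n / 2 ≤ l) (hl' : l ≤ n) :
    (∃ N' : Submodule ℤ (Fin (n - 1) → ℤ),
        IsCompl (Submodule.span ℤ (eta n '' {i | n / 2 ≤ i ∧ i ≤ n ∧ i ≠ l})) N') ∧
      Module.finrank ℤ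
        (Submodule.span ℤ (eta n '' {i | n / 2 ≤ i ∧ i ≤ n ∧ i ≠ l})) = n / 2 := by
  subst hn
  rw [span_eq_span_single k l (by omega) hl']
  have hb : ⇑(Pi.basisFun ℤ (Fin (2 * (k + 1) - 1))) = fun i => Pi.single i (1 : ℤ) :=
    funext fun i => Pi.basisFun_apply ℤ _ i
  constructor
  · refine ⟨Submodule.span ℤ
      ((fun i => Pi.single i (1 : ℤ)) '' {i : Fin (2 * (k + 1) - 1) | k ≤ i.val}ᶜ), ?_, ?_⟩
    · have h := (Pi.basisFun ℤ (Fin (2 * (k + 1) - 1))).linearIndependent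
      rw [hb] at h
      exact h.disjoint_span_image disjoint_compl_right
    · rw [codisjoint_iff, ← Submodule.span_union, ← Set.image_union,
        Set.union_compl_self, Set.image_univ, ← hb]
      exact (Pi.basisFun ℤ (Fin (2 * (k + 1) - 1))).span_eq
  · rw [Set.image_eq_range]
    have h := ((Pi.basisFun ℤ (Fin (2 * (k + 1) - 1))).linearIndependent.comp
      (Subtype.val : ↥{i : Fin (2 * (k + 1) - 1) | k ≤ i.val} → _) Subtype.val_injective)
    rw [hb, Function.comp_def] at h
    rw [finrank_span_eq_card h]
    have hfilter : Finset.univ.filter (fun i : Fin (2 * (k + 1) - 1) => k ≤ i.val) =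
        Finset.Ici (⟨k, by omega⟩ : Fin (2 * (k + 1) - 1)) := by
      ext i; simp [Fin.le_def]
    rw [Fintype.card_subtype]
    simp only [Set.mem_setOf_eq]
    rw [hfilter, Fin.card_Ici]
    simp; omega
end

section
/- For n = 2(k+1) with k ≥ 0, let S ⊂ {0, 1, ..., n} be any subset of cardinality n-1 such that neither {0, 1, ..., n/2} ⊆ S nor {n/2, n/2+1, ..., n} ⊆ S. Then the vectors {η_j : j ∈ S} form a ℤ-basis of ℤ^{n-1}. -/
/-- The "standard basis vector" with a natural-number index. -/
def eps (n x : ℕ) : Fin (n - 1) → ℤ := fun i => if i.val = x then 1 else 0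

theorem eta_span (k n : ℕ) (hn : n = 2 * (k + 1)) (S : Finset ℕ) (a b : ℕ)
    (ha : a ≤ k + 1) (hb : k + 1 ≤ b) (hab : a ≠ b)
    (hS : ∀ j, j ≤ n → j ≠ a → j ≠ b → j ∈ S) :
    ⊤ ≤ Submodule.span ℤ (Set.range fun j : S => eta n j) := by
  classical
  set P := Submodule.span ℤ (Set.range fun j : S => eta n j) with hP
  have heta : ∀ j (hj : j ∈ S), eta n j ∈ P :=
    fun j hj => Submodule.subset_span ⟨⟨j, hj⟩, rfl⟩
  -- the unit vectors that are directly members of the family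
  have hunitlo : ∀ x, x < k → x ∈ S → eps n x ∈ P := by
    intro x hx hm
    have h := heta x hm
    have heq : eta n x = eps n x := by
      funext i
      simp only [eta, eps]
      rw [if_pos (show x < n / 2 - 1 by omega)]
    rwa [heq] at h
  have hunithi : ∀ x, k ≤ x → x ≤ 2 * k → x + 1 ∈ S → eps n x ∈ P := by
    intro x hx hx' hm
    have h := heta (x + 1) hm
    have heq : eta n (x + 1) = eps n x := by
      funext i
      simp only [eta, eps]
      rw [if_neg (by omega), if_neg (by omega), if_pos (by omega)]
      exact if_congr (by omega) rfl rfl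
    rwa [heq] at h
  -- the two "sum" vectors
  have hv1mem : k ∈ S → (∑ x ∈ Finset.range (k + 1), eps n x) ∈ P := by
    intro hm
    have h := heta k hm
    have heq : eta n k = ∑ x ∈ Finset.range (k + 1), eps n x := by
      funext i
      rw [Finset.sum_apply]
      simp only [eta, eps]
      rw [if_neg (by omega), if_pos (by omega), Finset.sum_ite_eq]
      exact if_congr (by simp only [Finset.mem_range]; omega) rfl rfl
    rwa [heq] at h
  have hv2mem : n ∈ S → (∑ x ∈ Finset.Icc k (2 * k), eps n x) ∈ P := by
    intro hm
    have h := heta n hm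
    have heq : eta n n = ∑ x ∈ Finset.Icc k (2 * k), eps n x := by
      funext i
      rw [Finset.sum_apply]
      simp only [eta, eps]
      rw [if_neg (by omega), if_neg (by omega), if_neg (by omega),
        Finset.sum_ite_eq]
      exact if_congr (by simp only [Finset.mem_Icc]; have := i.isLt; omega) rfl rfl
    rwa [heq] at h
  -- recover a missing unit vector from a sum vector
  have hG : ∀ (F : Finset ℕ) (x0 : ℕ), x0 ∈ F → (∑ x ∈ F, eps n x) ∈ P →
      (∀ x ∈ F, x ≠ x0 → eps n x ∈ P) → eps n x0 ∈ P := by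
    intro F x0 hx0 hsum hrest
    have heq : eps n x0 = (∑ x ∈ F, eps n x) - ∑ x ∈ F.erase x0, eps n x := by
      rw [← Finset.add_sum_erase F _ hx0]
      exact (add_sub_cancel_right _ _).symm
    rw [heq]
    exact Submodule.sub_mem _ hsum (Submodule.sum_mem _ fun x hx =>
      hrest x (Finset.mem_of_mem_erase hx) (Finset.ne_of_mem_erase hx))
  -- the middle coordinate k is always recoverable
  have hek : eps n k ∈ P := by
    by_cases hA : k + 1 = a
    · -- use the first sum vector
      have hkS : k ∈ S := hS k (by omega) (by omega) (by omega)
      refine hG (Finset.range (k + 1)) k (Finset.mem_range.2 (by omega)) (hv1mem hkS) ?_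
      intro y hy hne
      rw [Finset.mem_range] at hy
      exact hunitlo y (by omega) (hS y (by omega) (by omega) (by omega))
    · by_cases hB : k + 1 = b
      · -- use the second sum vector
        have hnS : n ∈ S := hS n le_rfl (by omega) (by omega)
        refine hG (Finset.Icc k (2 * k)) k (Finset.mem_Icc.2 ⟨le_rfl, by omega⟩)
          (hv2mem hnS) ?_
        intro y hy hne
        rw [Finset.mem_Icc] at hy
        exact hunithi y (by omega) (by omega) (hS (y + 1) (by omega) (by omega) (by omega))
      · exact hunithi k le_rfl (by omega) (hS (k + 1) (by omega) hA hB)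
  -- all unit vectors are in the span
  have hall : ∀ x : ℕ, x ≤ 2 * k → eps n x ∈ P := by
    intro x hx
    by_cases hxk : x < k
    · by_cases hxa : x = a
      · -- missing low unit vector; recover via first sum vector
        have hkS : k ∈ S := hS k (by omega) (by omega) (by omega)
        refine hG (Finset.range (k + 1)) x (Finset.mem_range.2 (by omega)) (hv1mem hkS) ?_
        intro y hy hne
        rw [Finset.mem_range] at hy
        by_cases hyk : y < k
        · exact hunitlo y hyk (hS y (by omega) (by omega) (by omega))
        · have : y = k := by omega
          rw [this]; exact hek
      · exact hunitlo x hxk (hS x (by omega) hxa (by omega))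
    · by_cases hxb : x + 1 = b
      · -- missing high unit vector; recover via second sum vector
        have hnS : n ∈ S := hS n le_rfl (by omega) (by omega)
        refine hG (Finset.Icc k (2 * k)) x (Finset.mem_Icc.2 ⟨by omega, hx⟩)
          (hv2mem hnS) ?_
        intro y hy hne
        rw [Finset.mem_Icc] at hy
        by_cases hyk : y = k
        · rw [hyk]; exact hek
        · exact hunithi y (by omega) (by omega) (hS (y + 1) (by omega) (by omega) (by omega))
      · by_cases hxa : x + 1 = a
        · have : x = k := by omega
          rw [this]; exact hek
        · exact hunithi x (by omega) hx (hS (x + 1) (by omega) hxa hxb)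
  -- conclude
  rw [← (Pi.basisFun ℤ (Fin (n - 1))).span_eq]
  refine Submodule.span_le.2 ?_
  rintro _ ⟨i, rfl⟩
  have heq : Pi.basisFun ℤ (Fin (n - 1)) i = eps n i.val := by
    rw [Pi.basisFun_apply]
    funext i'
    rw [Pi.single_apply, eps]
    exact if_congr Fin.ext_iff rfl rfl
  rw [heq]
  exact hall i.val (by have := i.isLt; omega)

/-- A spanning family of `ℤ^d` of cardinality `d` is linearly independent. -/
theorem li_of_span (d : ℕ) (ι : Type) [Fintype ι] (hcard : Fintype.card ι = d)
    (v : ι → (Fin d → ℤ)) (hspan : ⊤ ≤ Submodule.span ℤ (Set.range v)) :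
    LinearIndependent ℤ v := by
  classical
  let e : Fin d ≃ ι := (Fintype.equivFinOfCardEq hcard).symm
  let M : Matrix (Fin d) (Fin d) ℤ := Matrix.of fun i j => v (e j) i
  have hsurj : Function.Surjective M.mulVecLin := by
    rw [← LinearMap.range_eq_top, Matrix.range_mulVecLin]
    have hMT : M.col = v ∘ e := rfl
    rw [hMT, e.surjective.range_comp]
    exact eq_top_iff.2 hspan
  have hinj : Function.Injective M.mulVecLin :=
    OrzechProperty.injective_of_surjective_endomorphism _ hsurj
  rw [Fintype.linearIndependent_iff]
  intro g hg j
  have hc : M.mulVecLin (fun i => g (e i)) = 0 := by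
    funext i
    have h1 : M.mulVecLin (fun i => g (e i)) i = ∑ j', g (e j') * v (e j') i := by
      simp [M, Matrix.mulVecLin_apply, Matrix.mulVec, dotProduct, mul_comm]
    rw [h1]
    have h2 : ∑ j', g (e j') * v (e j') i = ∑ s, g s * v s i :=
      Fintype.sum_equiv e _ _ fun _ => rfl
    rw [h2]
    have h3 : ∑ s, g s * v s i = (∑ s, g s • v s) i := by
      rw [Finset.sum_apply]; simp
    rw [h3, hg]
  have h0 : (fun i => g (e i)) = 0 := hinj (by rw [hc, map_zero])
  have := congrFun h0 (e.symm j)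
  simpa [e] using this

theorem eta_subset_basis (k n : ℕ) (hn : n = 2 * (k + 1)) (S : Finset ℕ)
    (hSsub : S ⊆ Finset.range (n + 1)) (hcard : S.card = n - 1)
    (h1 : ¬ (Finset.range (n / 2 + 1) : Finset ℕ) ⊆ S)
    (h2 : ¬ (Finset.Icc (n / 2) n : Finset ℕ) ⊆ S) :
    ∃ b : Module.Basis S ℤ (Fin (n - 1) → ℤ), ∀ j : S, b j = eta n j := by
  classical
  obtain ⟨a0, ha0r, ha0S⟩ := Finset.not_subset.1 h1
  obtain ⟨b0, hb0r, hb0S⟩ := Finset.not_subset.1 h2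
  rw [Finset.mem_range] at ha0r
  rw [Finset.mem_Icc] at hb0r
  have ha0 : a0 ≤ k + 1 := by omega
  have hb0 : k + 1 ≤ b0 ∧ b0 ≤ n := by omega
  set T := Finset.range (n + 1) \ S with hT
  have hTcard : T.card = 2 := by
    rw [hT, Finset.card_sdiff_of_subset hSsub, Finset.card_range, hcard]
    omega
  have ha0T : a0 ∈ T := Finset.mem_sdiff.2 ⟨Finset.mem_range.2 (by omega), ha0S⟩
  have hb0T : b0 ∈ T := Finset.mem_sdiff.2 ⟨Finset.mem_range.2 (by omega), hb0S⟩
  have key : ∃ a b : ℕ, a ≤ k + 1 ∧ k + 1 ≤ b ∧ a ≠ b ∧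
      ∀ j, j ≤ n → j ≠ a → j ≠ b → j ∈ S := by
    have pairS : ∀ a b : ℕ, a ∈ T → b ∈ T → a ≠ b →
        ∀ j, j ≤ n → j ≠ a → j ≠ b → j ∈ S := by
      intro a b haT hbT hab j hj hja hjb
      have hpair : ({a, b} : Finset ℕ) = T := by
        apply Finset.eq_of_subset_of_card_le
        · intro x hx
          rcases Finset.mem_insert.1 hx with h | h
          · rwa [h]
          · rw [Finset.mem_singleton.1 h]; exact hbT
        · rw [hTcard, Finset.card_pair hab]
      have hjT : j ∉ T := by
        rw [← hpair]
        simp only [Finset.mem_insert, Finset.mem_singleton]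
        push_neg
        exact ⟨hja, hjb⟩
      rw [hT, Finset.mem_sdiff] at hjT
      push_neg at hjT
      exact hjT (Finset.mem_range.2 (by omega))
    by_cases hab : a0 = b0
    · -- then a0 = b0 = k + 1; get a second element of T
      have heq : a0 = k + 1 := by omega
      obtain ⟨c, hcT, hca⟩ := Finset.exists_mem_ne (s := T) (by omega) a0
      have hc : c ≤ n ∧ c ∉ S := by
        have := Finset.mem_sdiff.1 hcT
        rw [Finset.mem_range] at this
        exact ⟨by omega, this.2⟩
      by_cases hck : c ≤ k
      · exact ⟨c, k + 1, by omega, le_rfl, by omega,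
          pairS c (k + 1) hcT (heq ▸ ha0T) (by omega)⟩
      · exact ⟨k + 1, c, le_rfl, by omega, by omega,
          pairS (k + 1) c (heq ▸ ha0T) hcT (by omega)⟩
    · exact ⟨a0, b0, ha0, hb0.1, hab, pairS a0 b0 ha0T hb0T hab⟩
  obtain ⟨a, b, ha, hb, hab, hS⟩ := key
  have hspan := eta_span k n hn S a b ha hb hab hS
  have hScard : Fintype.card S = n - 1 := by rw [Fintype.card_coe]; exact hcard
  have hind : LinearIndependent ℤ (fun j : S => eta n j) :=
    li_of_span (n - 1) S hScard _ hspan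
  exact ⟨Module.Basis.mk hind hspan, fun j => Module.Basis.mk_apply _ _ _⟩
end

section
/- The permutation ρ of {0, 1, ..., n} (defined by ρ(j) = n-1-j for 0 ≤ j < n/2-1 and n/2 < j < n, ρ(n/2-1) = n, ρ(n/2) = n/2, ρ(n) = n/2-1) is an even permutation if n ≡ 0 (mod 4) and an odd permutation if n ≡ 2 (mod 4). -/
/-- The permutation `ρ` of `{0, 1, …, n}`:
`ρ(j) = n - 1 - j` if `0 ≤ j < n/2 - 1` or `n/2 < j < n`,
`ρ(n/2 - 1) = n`, `ρ(n/2) = n/2`, and `ρ(n) = n/2 - 1`. -/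
def rho (n j : ℕ) : ℕ :=
  if j = n / 2 - 1 then n
  else if j = n / 2 then n / 2
  else if j = n then n / 2 - 1
  else n - 1 - j

/-- The list of swaps `(i, n-1-i)` for `i < k`. -/
def rhoSwaps (n k : ℕ) : List (Equiv.Perm (Fin (n + 1))) :=
  (List.range k).map (fun i =>
    Equiv.swap (⟨min i n, by omega⟩ : Fin (n + 1)) ⟨n - 1 - i, by omega⟩)

lemma rhoSwaps_prod_val (n : ℕ) (hn : 2 ≤ n) (k : ℕ) :
    k ≤ n / 2 - 1 → ∀ j : Fin (n + 1),
    (((rhoSwaps n k).prod) j).val =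
      if j.val < k ∨ (n - k ≤ j.val ∧ j.val < n) then n - 1 - j.val else j.val := by
  induction k with
  | zero =>
      intro _ j
      simp only [rhoSwaps, List.range_zero, List.map_nil, List.prod_nil,
        Equiv.Perm.coe_one, id_eq]
      rw [if_neg]; omega
  | succ k ih =>
      intro hk j
      have hk' : k ≤ n / 2 - 1 := by omega
      have hmin : min k n = k := by omega
      rw [rhoSwaps, List.range_succ, List.map_append, List.prod_append]
      simp only [List.map_cons, List.map_nil, List.prod_cons, List.prod_nil, mul_one]
      rw [Equiv.Perm.mul_apply]
      have ih' := ih hk'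
      rw [rhoSwaps] at ih'
      rcases eq_or_ne j.val k with hj | hj
      · have hja : j = ⟨min k n, by omega⟩ := by
          apply Fin.val_injective; simp [hmin, hj]
        rw [hja, Equiv.swap_apply_left, ih' ⟨n - 1 - k, by omega⟩]
        simp only [hmin]
        rw [if_neg (by omega), if_pos (by omega)]
      · rcases eq_or_ne j.val (n - 1 - k) with hj2 | hj2
        · have hja : j = (⟨n - 1 - k, by omega⟩ : Fin (n + 1)) := by
            apply Fin.val_injective; simp [hj2]
          rw [hja, Equiv.swap_apply_right, ih' ⟨min k n, by omega⟩]
          simp only [hmin]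
          rw [if_neg (by omega), if_pos (by omega)]
          omega
        · rw [Equiv.swap_apply_of_ne_of_ne
            (by simp [Fin.ext_iff, hmin]; omega) (by simp [Fin.ext_iff]; omega)]
          rw [ih' j]
          split_ifs <;> omega

theorem rho_sign (n : ℕ) (hn2 : 2 ≤ n) (hne : Even n) (σ : Equiv.Perm (Fin (n + 1)))
    (hσ : ∀ j : Fin (n + 1), (σ j).val = rho n j.val) :
    (n % 4 = 0 → Equiv.Perm.sign σ = 1) ∧ (n % 4 = 2 → Equiv.Perm.sign σ = -1) := by
  have hhalf : 1 ≤ n / 2 := by omega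
  have hd2 : n / 2 + n / 2 = n := by obtain ⟨m, hm⟩ := hne; omega
  set a : Fin (n + 1) := ⟨n / 2 - 1, by omega⟩ with ha
  set b : Fin (n + 1) := ⟨n, by omega⟩ with hb
  set L : List (Equiv.Perm (Fin (n + 1))) := Equiv.swap a b :: rhoSwaps n (n / 2 - 1) with hL
  have hσL : σ = L.prod := by
    apply Equiv.ext
    intro j
    apply Fin.val_injective
    rw [hσ j, hL, List.prod_cons, Equiv.Perm.mul_apply]
    have hval := rhoSwaps_prod_val n hn2 (n / 2 - 1) le_rfl j
    set y := (rhoSwaps n (n / 2 - 1)).prod j with hy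
    rcases eq_or_ne j.val (n / 2 - 1) with h1 | h1
    · have hyv : y.val = j.val := by rw [hval, if_neg (by omega)]
      have hye : y = a := by apply Fin.val_injective; rw [hyv, h1]
      rw [hye, Equiv.swap_apply_left]
      simp [rho, h1, hb]
    · rcases eq_or_ne j.val (n / 2) with h2 | h2
      · have hyv : y.val = j.val := by rw [hval, if_neg (by omega)]
        rw [Equiv.swap_apply_of_ne_of_ne
          (by rw [Fin.ne_iff_vne, hyv, ha]; simp; omega)
          (by rw [Fin.ne_iff_vne, hyv, hb]; simp; omega)]
        rw [hyv, h2]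
        simp only [rho]
        rw [if_neg (by omega)]
        simp
      · rcases eq_or_ne j.val n with h3 | h3
        · have hyv : y.val = j.val := by rw [hval, if_neg (by omega)]
          have hye : y = b := by apply Fin.val_injective; rw [hyv, h3]
          rw [hye, Equiv.swap_apply_right]
          simp only [rho]
          rw [if_neg (by omega), if_neg (by omega), if_pos h3]
        · have hyv : y.val = n - 1 - j.val := by rw [hval, if_pos (by omega)]
          rw [Equiv.swap_apply_of_ne_of_ne
            (by rw [Fin.ne_iff_vne, hyv, ha]; simp; omega)
            (by rw [Fin.ne_iff_vne, hyv, hb]; simp; omega)]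
          rw [hyv]
          simp only [rho]
          rw [if_neg h1, if_neg h2, if_neg h3]
  have hlen : L.length = n / 2 := by
    simp [hL, rhoSwaps]; omega
  have hswaps : ∀ g ∈ L, g.IsSwap := by
    intro g hg
    rw [hL] at hg
    rcases List.mem_cons.mp hg with h | h
    · exact ⟨a, b, by rw [Fin.ne_iff_vne, ha, hb]; simp; omega, h⟩
    · rw [rhoSwaps, List.mem_map] at h
      obtain ⟨i, hi, rfl⟩ := h
      rw [List.mem_range] at hi
      exact ⟨_, _, by rw [Fin.ne_iff_vne]; simp; omega, rfl⟩
  have hsign : Equiv.Perm.sign σ = (-1 : ℤˣ) ^ (n / 2) := by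
    rw [hσL, Equiv.Perm.sign_prod_list_swap hswaps, hlen]
  constructor
  · intro h4
    rw [hsign, Even.neg_one_pow]
    rw [Nat.even_iff]; omega
  · intro h4
    rw [hsign, Odd.neg_one_pow]
    rw [Nat.odd_iff]; omega
end

section
/- Let e be an edge of Δ^n (the convex hull of two vertices A_p, A_q, p < q) that is not contained in F' ∪ F'', where F' = conv{A_0, ..., A_{n/2-1}} and F'' = conv{A_{n/2+1}, ..., A_n}. Write e = ∩_{j=1}^{n-1} Δ_{l_j}^{n-1} where {l_1, ..., l_{n-1}} = {0, ..., n} \ {p, q}. Then the vectors {η_{n-l_1}, ..., η_{n-l_{n-1}}} form a basis of ℤ^{n-1}. -/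
section Aux

variable {n h : ℕ}

/-- the `t`-th standard basis vector of `ℤ^{n-1}` (0-indexed). -/
def etaStd (n t : ℕ) : Fin (n - 1) → ℤ := fun i => if i.val = t then 1 else 0

lemma eta_low (hn : n = 2 * h) (hh : 1 ≤ h) {t : ℕ} (ht : t + 1 < h) :
    eta n t = etaStd n t := by
  have h2 : n / 2 = h := by omega
  funext i
  simp only [eta, etaStd, h2]
  rw [if_pos (by omega)]

lemma eta_mid (hn : n = 2 * h) (hh : 1 ≤ h) {t : ℕ} (ht1 : h ≤ t) (ht2 : t < n) :
    eta n t = etaStd n (t - 1) := by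
  have h2 : n / 2 = h := by omega
  funext i
  simp only [eta, etaStd, h2]
  rw [if_neg (by omega), if_neg (by omega), if_pos ht2]
  split_ifs <;> omega

lemma eta_half (hn : n = 2 * h) (hh : 1 ≤ h) :
    eta n (h - 1) = fun i => if i.val < h then 1 else 0 := by
  have h2 : n / 2 = h := by omega
  funext i
  simp only [eta, h2]
  split_ifs <;> omega

lemma eta_top_s16 (hn : n = 2 * h) (hh : 1 ≤ h) :
    eta n n = fun i => if h - 1 ≤ i.val then 1 else 0 := by
  have h2 : n / 2 = h := by omega
  funext i
  simp only [eta, h2]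
  rw [if_neg (by omega), if_neg (by omega), if_neg (by omega)]
  split_ifs <;> omega

lemma lowSum_eq (hn : n = 2 * h) (hh : 1 ≤ h) :
    (fun i : Fin (n - 1) => if i.val < h then (1 : ℤ) else 0)
      = ∑ t ∈ Finset.range h, etaStd n t := by
  funext i
  rw [Finset.sum_apply]
  simp only [etaStd]
  rw [Finset.sum_ite_eq (Finset.range h) i.val (fun _ => (1 : ℤ))]
  simp [Finset.mem_range]

lemma highSum_eq (hn : n = 2 * h) (hh : 1 ≤ h) :
    (fun i : Fin (n - 1) => if h - 1 ≤ i.val then (1 : ℤ) else 0)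
      = ∑ t ∈ Finset.Ico (h - 1) (n - 1), etaStd n t := by
  funext i
  rw [Finset.sum_apply]
  simp only [etaStd]
  rw [Finset.sum_ite_eq (Finset.Ico (h - 1) (n - 1)) i.val (fun _ => (1 : ℤ))]
  have hi := i.isLt
  by_cases hc : h - 1 <= i.val
  · rw [if_pos hc, if_pos (Finset.mem_Ico.mpr ⟨hc, by omega⟩)]
  · rw [if_neg hc, if_neg (fun hm => hc (Finset.mem_Ico.mp hm).1)]

lemma extract_mem {T : Submodule ℤ (Fin (n - 1) → ℤ)} {s : Finset ℕ} {t : ℕ}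
    (ht : t ∈ s) (hsum : (∑ u ∈ s, etaStd n u) ∈ T)
    (hrest : ∀ u ∈ s.erase t, etaStd n u ∈ T) : etaStd n t ∈ T := by
  have he : etaStd n t = (∑ u ∈ s, etaStd n u) - ∑ u ∈ s.erase t, etaStd n u := by
    rw [← Finset.add_sum_erase s (etaStd n) ht]
    abel
  rw [he]
  exact T.sub_mem hsum (T.sum_mem hrest)

end Aux

/-- For an edge `e = conv{A_p, A_q}` of `Δⁿ` not contained in `F' ∪ F''`
(`F' = conv{A_0,…,A_{n/2-1}}`, `F'' = conv{A_{n/2+1},…,A_n}`), writing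
`e = ∩_{l ∉ {p,q}} Δ_l^{n-1}`, the vectors `{η_{n-l} : l ∈ {0,…,n} \ {p,q}}`
form a basis of `ℤ^{n-1}`. -/
theorem eta_edge_basis (k n : ℕ) (hn : n = 2 * (k + 1)) (p q : ℕ)
    (hpq : p < q) (hq : q ≤ n)
    (hF' : ¬ (p ≤ n / 2 - 1 ∧ q ≤ n / 2 - 1))
    (hF'' : ¬ (n / 2 + 1 ≤ p ∧ n / 2 + 1 ≤ q)) :
    ∃ b : Module.Basis {l : Fin (n + 1) // l.val ≠ p ∧ l.val ≠ q} ℤ (Fin (n - 1) → ℤ),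
      ∀ l : {l : Fin (n + 1) // l.val ≠ p ∧ l.val ≠ q}, b l = eta n (n - l.val.val) := by
  set h := k + 1 with hhdef
  have hh : 1 ≤ h := Nat.le_add_left 1 k
  have hn' : n = 2 * h := hn
  have h2 : n / 2 = h := by omega
  rw [h2] at hF' hF''
  push_neg at hF' hF''
  -- basic inequalities
  have hph : p ≤ h := by
    by_contra hc
    push_neg at hc
    exact absurd (hF'' (by omega)) (by omega)
  have hqh : h ≤ q := by
    by_contra hc
    push_neg at hc
    have := hF' (by omega)
    omega
  set j1 := n - q with hj1def
  set j2 := n - p with hj2def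
  have hj1 : j1 ≤ h := by omega
  have hj2 : h ≤ j2 := by omega
  have hj2n : j2 ≤ n := by omega
  have hj12 : j1 < j2 := by omega
  -- the family of vectors
  set S := {l : Fin (n + 1) // l.val ≠ p ∧ l.val ≠ q} with hSdef
  set v : S → (Fin (n - 1) → ℤ) := fun l => eta n (n - l.val.val) with hvdef
  set T : Submodule ℤ (Fin (n - 1) → ℤ) := Submodule.span ℤ (Set.range v) with hTdef
  have avail : ∀ j : ℕ, j ≤ n → j ≠ j1 → j ≠ j2 → eta n j ∈ T := by
    intro j hjn hja hjb
    have hl1 : n - j ≠ p := by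
      intro hc
      apply hjb
      omega
    have hl2 : n - j ≠ q := by
      intro hc
      apply hja
      omega
    have hmem : eta n (n - (n - j)) ∈ T :=
      Submodule.subset_span ⟨⟨⟨n - j, by omega⟩, hl1, hl2⟩, rfl⟩
    rwa [show n - (n - j) = j by omega] at hmem
  -- direct standard vectors
  have P1 : ∀ t : ℕ, t + 1 < h → t ≠ j1 → etaStd n t ∈ T := by
    intro t ht htj
    rw [← eta_low hn' hh ht]
    exact avail t (by omega) htj (by omega)
  have P2 : ∀ t : ℕ, h ≤ t → t < n - 1 → t + 1 ≠ j2 → etaStd n t ∈ T := by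
    intro t ht1 ht2 htj
    have : etaStd n t = etaStd n (t + 1 - 1) := by norm_num
    rw [this, ← eta_mid hn' hh (by omega) (by omega)]
    exact avail (t + 1) (by omega) (by omega) htj
  have LS : h - 1 ≠ j1 → (∑ t ∈ Finset.range h, etaStd n t) ∈ T := by
    intro hne
    rw [← lowSum_eq hn' hh, ← eta_half hn' hh]
    exact avail (h - 1) (by omega) hne (by omega)
  have HS : j2 ≠ n → (∑ t ∈ Finset.Ico (h - 1) (n - 1), etaStd n t) ∈ T := by
    intro hne
    rw [← highSum_eq hn' hh, ← eta_top_s16 hn' hh]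
    exact avail n le_rfl (by omega) (fun hc => hne hc.symm)
  -- the middle standard vector e_{h-1}
  have P3 : etaStd n (h - 1) ∈ T := by
    by_cases hc1 : h = j1
    · refine extract_mem (s := Finset.range h) (Finset.mem_range.mpr (by omega))
        (LS (by omega)) ?_
      intro u hu
      rw [Finset.mem_erase, Finset.mem_range] at hu
      exact P1 u (by omega) (by omega)
    · by_cases hc2 : h = j2
      · refine extract_mem (s := Finset.Ico (h - 1) (n - 1))
          (Finset.mem_Ico.mpr (by omega)) (HS (by omega)) ?_
        intro u hu
        rw [Finset.mem_erase, Finset.mem_Ico] at hu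
        exact P2 u (by omega) (by omega) (by omega)
      · have : etaStd n (h - 1) = etaStd n (h - 1) := rfl
        rw [show h - 1 = h - 1 from rfl, ← eta_mid hn' hh le_rfl (by omega)]
        exact avail h (by omega) (fun hc => hc1 hc) (fun hc => hc2 hc)
  -- the low exceptional vector
  have P4 : ∀ t : ℕ, t + 1 < h → t = j1 → etaStd n t ∈ T := by
    intro t ht htj
    refine extract_mem (s := Finset.range h) (Finset.mem_range.mpr (by omega))
      (LS (by omega)) ?_
    intro u hu
    rw [Finset.mem_erase, Finset.mem_range] at hu
    by_cases hu2 : u = h - 1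
    · rw [hu2]; exact P3
    · exact P1 u (by omega) (by omega)
  -- the high exceptional vector
  have P5 : ∀ t : ℕ, h ≤ t → t < n - 1 → t + 1 = j2 → etaStd n t ∈ T := by
    intro t ht1 ht2 htj
    refine extract_mem (s := Finset.Ico (h - 1) (n - 1))
      (Finset.mem_Ico.mpr (by omega)) (HS (by omega)) ?_
    intro u hu
    rw [Finset.mem_erase, Finset.mem_Ico] at hu
    by_cases hu2 : u = h - 1
    · rw [hu2]; exact P3
    · exact P2 u (by omega) (by omega) (by omega)
  -- all standard vectors lie in T
  have Pall : ∀ i : Fin (n - 1), etaStd n i.val ∈ T := by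
    intro i
    have hi := i.isLt
    rcases lt_trichotomy (i.val + 1) h with hlt | heq | hgt
    · by_cases hc : i.val = j1
      · exact P4 i.val hlt hc
      · exact P1 i.val hlt hc
    · have : i.val = h - 1 := by omega
      rw [this]; exact P3
    · by_cases hc : i.val + 1 = j2
      · exact P5 i.val (by omega) (by omega) hc
      · exact P2 i.val (by omega) (by omega) hc
  have hTtop : T = ⊤ := by
    rw [eq_top_iff]
    intro x _
    rw [pi_eq_sum_univ x]
    refine T.sum_mem fun i _ => T.smul_mem _ ?_
    have : (fun j : Fin (n - 1) => if i = j then (1 : ℤ) else 0) = etaStd n i.val := by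
      funext j
      simp only [etaStd, Fin.ext_iff]
      split_ifs <;> omega
    rw [this]
    exact Pall i
  -- cardinality of the index type
  have hcard : Fintype.card S = n - 1 := by
    have hp' : p < n + 1 := by omega
    have hq' : q < n + 1 := by omega
    rw [Fintype.card_subtype]
    have hfil : (Finset.univ.filter fun l : Fin (n + 1) => l.val ≠ p ∧ l.val ≠ q)
        = Finset.univ \ {(⟨p, hp'⟩ : Fin (n + 1)), ⟨q, hq'⟩} := by
      ext l
      simp [Fin.ext_iff]
    rw [hfil, Finset.card_sdiff_of_subset (Finset.subset_univ _), Finset.card_univ, Fintype.card_fin,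
      Finset.card_insert_of_notMem (by simp [Fin.ext_iff]; omega), Finset.card_singleton]
    omega
  -- build the basis
  let e : S ≃ Fin (n - 1) := Fintype.equivFinOfCardEq hcard
  let M : Matrix (Fin (n - 1)) (Fin (n - 1)) ℤ := Matrix.of fun i c => v (e.symm c) i
  let f := M.mulVecLin
  have hcol : ∀ c : Fin (n - 1), f (Pi.single c 1) = v (e.symm c) := by
    intro c
    funext i
    simp [f, M, Matrix.mulVecLin_apply, Matrix.mulVec_single]
  have hsurj : Function.Surjective f := by
    rw [← LinearMap.range_eq_top, Matrix.range_mulVecLin]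
    have : Set.range M.transpose = Set.range v := by
      ext w
      constructor
      · rintro ⟨c, rfl⟩
        exact ⟨e.symm c, rfl⟩
      · rintro ⟨l, rfl⟩
        exact ⟨e l, by funext i; simp [M, Matrix.transpose]⟩
    rw [show Set.range M.col = Set.range v from this, ← hTdef, hTtop]
  have hinj : Function.Injective f :=
    OrzechProperty.injective_of_surjective_endomorphism f hsurj
  let g : (Fin (n - 1) → ℤ) ≃ₗ[ℤ] (Fin (n - 1) → ℤ) :=
    LinearEquiv.ofBijective f ⟨hinj, hsurj⟩
  refine ⟨((Pi.basisFun ℤ (Fin (n - 1))).map g).reindex e.symm, fun l => ?_⟩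
  rw [Module.Basis.reindex_apply, Module.Basis.map_apply, Pi.basisFun_apply]
  have : g (Pi.single (e.symm.symm l) 1) = f (Pi.single (e l) 1) := by
    simp [g, LinearEquiv.ofBijective_apply]
    rfl
  rw [this, hcol, Equiv.symm_apply_apply]
end
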